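/- arXiv:2209.01761 — 2 statements merged into one kernel-verified Lean document; each statement's English description precedes it below -/
import Mathlib

section
/- (Corollary 1: lower bound under a unital map, Eq. (14)) If Φ is additionally a unital quantum channel on B(H) (i.e. Φ(𝟙) = 𝟙, where 𝟙 is the identity on H), then for any input state ρ_in = Σ_{i=1}^r p_i |p_i⟩⟨p_i|, the chain of inequalities ΔS ≥ L_otm ≥ 0 holds; in particular Σ_{i=1}^r e^{−C(Φ(|p_i⟩⟨p_i|), ρ_out)} ≤ 1. -/
open scoped Kronecker BigOperators ComplexOrder

namespace QCE

variable {ι : Type*} [Fintype ι] [DecidableEq ι]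

/-- Apply a real function to a matrix via the spectral decomposition (functional calculus on
the eigenvalues); returns `0` if the matrix is not Hermitian. -/
noncomputable def matFun (A : Matrix ι ι ℂ) (f : ℝ → ℝ) : Matrix ι ι ℂ :=
  if h : A.IsHermitian then h.cfc f else 0

/-- Matrix logarithm taken on the support (eigenvalue `0` is sent to `0`,
since `Real.log 0 = 0`). -/
noncomputable def matLog (A : Matrix ι ι ℂ) : Matrix ι ι ℂ :=
  matFun A Real.log

/-- Quantum cross entropy `C(ρ₁, ρ₂) = -Tr[ρ₁ ln ρ₂]`, with the logarithm on the support. -/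
noncomputable def crossEnt (ρ₁ ρ₂ : Matrix ι ι ℂ) : ℝ :=
  -((ρ₁ * matLog ρ₂).trace.re)

/-- Von Neumann entropy `S(ρ) = -Tr[ρ ln ρ]`. -/
noncomputable def vnEntropy (ρ : Matrix ι ι ℂ) : ℝ :=
  crossEnt ρ ρ

/-- A density matrix: positive semidefinite with unit trace. -/
def IsDensityMatrix (ρ : Matrix ι ι ℂ) : Prop :=
  ρ.PosSemidef ∧ ρ.trace = 1

/-- The rank-one projector `|v⟩⟨v|`. -/
noncomputable def outer (v : ι → ℂ) : Matrix ι ι ℂ :=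
  Matrix.vecMulVec v (star v)

/-- An orthonormal family of vectors. -/
def OrthonormalFam {r : ℕ} (v : Fin r → ι → ℂ) : Prop :=
  ∀ i j, (∑ a, star (v i a) * v j a) = if i = j then (1 : ℂ) else 0

/-- The Choi matrix of a linear map on matrices. -/
noncomputable def choi {κ : Type*} [Fintype κ] [DecidableEq κ]
    (Φ : Matrix ι ι ℂ →ₗ[ℂ] Matrix κ κ ℂ) : Matrix (ι × κ) (ι × κ) ℂ :=
  ∑ i : ι, ∑ j : ι, (Matrix.single i j (1 : ℂ)) ⊗ₖ (Φ (Matrix.single i j 1))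

/-- A quantum channel: completely positive (positive semidefinite Choi matrix, by Choi's
theorem) and trace preserving. -/
def IsCPTP {κ : Type*} [Fintype κ] [DecidableEq κ]
    (Φ : Matrix ι ι ℂ →ₗ[ℂ] Matrix κ κ ℂ) : Prop :=
  (choi Φ).PosSemidef ∧ ∀ ρ : Matrix ι ι ℂ, (Φ ρ).trace = ρ.trace

/-- Partial trace over the second tensor factor. -/
noncomputable def ptraceB {dA dB : ℕ}
    (ρ : Matrix (Fin dA × Fin dB) (Fin dA × Fin dB) ℂ) : Matrix (Fin dA) (Fin dA) ℂ :=
  Matrix.of fun i j => ∑ k : Fin dB, ρ (i, k) (j, k)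

/-- Partial trace over the first tensor factor. -/
noncomputable def ptraceA {dA dB : ℕ}
    (ρ : Matrix (Fin dA × Fin dB) (Fin dA × Fin dB) ℂ) : Matrix (Fin dB) (Fin dB) ℂ :=
  Matrix.of fun i j => ∑ k : Fin dA, ρ (k, i) (k, j)


/-- Matrix square root via the spectral decomposition. -/
noncomputable def matSqrt (A : Matrix ι ι ℂ) : Matrix ι ι ℂ :=
  matFun A Real.sqrt

/-- Quantum fidelity `F[ρ,σ] = (Tr[√(√ρ σ √ρ)])²`. -/
noncomputable def fidelity (ρ σ : Matrix ι ι ℂ) : ℝ :=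
  ((matSqrt (matSqrt ρ * σ * matSqrt ρ)).trace.re) ^ 2



set_option linter.unusedSectionVars false

section Aux1
open Matrix


lemma outer_conjTranspose (x : ι → ℂ) : (outer x)ᴴ = outer x := by
  ext i j
  simp [outer, vecMulVec_apply, mul_comm]

lemma outer_posSemidef (x : ι → ℂ) : (outer x).PosSemidef := by
  refine Matrix.PosSemidef.of_dotProduct_mulVec_nonneg (outer_conjTranspose x : _) fun y => ?_
  have : dotProduct (star y) (outer x *ᵥ y)
      = star (dotProduct (star x) y) * (dotProduct (star x) y) := by
    simp only [dotProduct, mulVec, outer, vecMulVec_apply, Pi.star_apply, star_sum, star_mul',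
      star_star, Finset.mul_sum, Finset.sum_mul]
    rw [Finset.sum_comm]
    refine Finset.sum_congr rfl fun i _ => Finset.sum_congr rfl fun j _ => by ring
  rw [this]
  exact star_mul_self_nonneg _

lemma outer_mul_outer {r : ℕ} {v : Fin r → ι → ℂ} (hv : OrthonormalFam v) (i j : Fin r) :
    outer (v i) * outer (v j) = if i = j then outer (v i) else 0 := by
  have h := hv i j
  ext a b
  simp only [Matrix.mul_apply, outer, vecMulVec_apply, Pi.star_apply]
  have : ∑ c, v i a * star (v i c) * (v j c * star (v j b))
      = (v i a * star (v j b)) * ∑ c, star (v i c) * v j c := by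
    rw [Finset.mul_sum]; exact Finset.sum_congr rfl fun c _ => by ring
  rw [this, h]
  split_ifs with hij
  · subst hij; simp [vecMulVec_apply]
  · simp

lemma trace_outer {r : ℕ} {v : Fin r → ι → ℂ} (hv : OrthonormalFam v) (i : Fin r) :
    (outer (v i)).trace = 1 := by
  have h := hv i i
  rw [if_pos rfl] at h
  rw [Matrix.trace, ← h]
  exact Finset.sum_congr rfl fun a _ => by
    simp [Matrix.diag, outer, vecMulVec_apply, mul_comm]

lemma psd_diag_re_nonneg {M : Matrix ι ι ℂ} (hM : M.PosSemidef) (k : ι) :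
    0 ≤ (M k k).re ∧ (M k k).im = 0 := by
  have h := hM.dotProduct_mulVec_nonneg (Pi.single k 1)
  have hd : dotProduct (star (Pi.single k (1:ℂ))) (M *ᵥ Pi.single k 1) = M k k := by
    simp [dotProduct, mulVec, Pi.single_apply, Finset.mul_sum]
  rw [hd] at h
  exact RCLike.nonneg_iff.mp h

end Aux1


section Aux2
open Matrix

lemma sum_mulVec' {γ : Type*} (s : Finset γ) (f : γ → Matrix ι ι ℂ) (v : ι → ℂ) :
    (∑ g ∈ s, f g) *ᵥ v = ∑ g ∈ s, f g *ᵥ v := by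
  ext i
  simp only [mulVec, dotProduct, Matrix.sum_apply, Finset.sum_apply, Finset.sum_mul]
  rw [Finset.sum_comm]

lemma dotProduct_sum' {γ : Type*} (s : Finset γ) (x : ι → ℂ) (w : γ → ι → ℂ) :
    dotProduct x (∑ g ∈ s, w g) = ∑ g ∈ s, dotProduct x (w g) := by
  simp only [dotProduct, Finset.sum_apply, Finset.mul_sum]
  rw [Finset.sum_comm]

lemma choi_entry (Φ : Matrix ι ι ℂ →ₗ[ℂ] Matrix ι ι ℂ) (i j k l : ι) :
    choi Φ (i, k) (j, l) = Φ (Matrix.single i j 1) k l := by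
  simp only [choi, Matrix.sum_apply, kroneckerMap_apply]
  rw [Fintype.sum_eq_single i, Fintype.sum_eq_single j]
  · rw [Matrix.single_apply_same, one_mul]
  · intro c hc
    rw [Matrix.single_apply_of_ne, zero_mul]
    exact fun h => hc h.2
  · intro b hb
    refine Finset.sum_eq_zero fun c _ => ?_
    rw [Matrix.single_apply_of_ne, zero_mul]
    exact fun h => hb h.1

lemma map_eq_sum (Φ : Matrix ι ι ℂ →ₗ[ℂ] Matrix ι ι ℂ) (X : Matrix ι ι ℂ) :
    Φ X = ∑ i, ∑ j, X i j • Φ (Matrix.single i j 1) := by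
  conv_lhs => rw [matrix_eq_sum_single X]
  rw [map_sum]
  refine Finset.sum_congr rfl fun i _ => ?_
  rw [map_sum]
  refine Finset.sum_congr rfl fun j _ => ?_
  rw [← _root_.map_smul, smul_single, smul_eq_mul, mul_one]

lemma map_entry (Φ : Matrix ι ι ℂ →ₗ[ℂ] Matrix ι ι ℂ) (X : Matrix ι ι ℂ) (k l : ι) :
    Φ X k l = ∑ i, ∑ j, X i j * choi Φ (i, k) (j, l) := by
  conv_lhs => rw [map_eq_sum Φ X]
  simp only [Matrix.sum_apply, Matrix.smul_apply, smul_eq_mul, choi_entry]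

lemma quad_kron {A B : Matrix ι ι ℂ} (x y : ι → ℂ) :
    dotProduct (star fun p : ι × ι => x p.1 * y p.2)
        ((A ⊗ₖ B) *ᵥ fun p : ι × ι => x p.1 * y p.2)
      = (dotProduct (star x) (A *ᵥ x)) * (dotProduct (star y) (B *ᵥ y)) := by
  have hmv : ∀ c e, ((A ⊗ₖ B) *ᵥ fun p : ι × ι => x p.1 * y p.2) (c, e)
      = (A *ᵥ x) c * (B *ᵥ y) e := by
    intro c e
    simp only [mulVec, dotProduct, kroneckerMap_apply, Fintype.sum_prod_type]
    rw [Finset.sum_mul_sum]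
    exact Finset.sum_congr rfl fun c' _ => Finset.sum_congr rfl fun e' _ => by ring
  have h1 : dotProduct (star fun p : ι × ι => x p.1 * y p.2)
        ((A ⊗ₖ B) *ᵥ fun p : ι × ι => x p.1 * y p.2)
      = ∑ c, ∑ e, (star (x c) * (A *ᵥ x) c) * (star (y e) * (B *ᵥ y) e) := by
    simp only [dotProduct, Pi.star_apply, Fintype.sum_prod_type]
    refine Finset.sum_congr rfl fun c _ => Finset.sum_congr rfl fun e _ => ?_
    rw [hmv c e, star_mul']
    ring
  rw [h1, dotProduct, dotProduct, Finset.sum_mul_sum]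
  simp only [Pi.star_apply]

lemma std_quad (B : Matrix ι ι ℂ) (a i j : ι) :
    dotProduct (star fun c => B a c) (Matrix.single i j 1 *ᵥ fun c => B a c)
      = star (B a i) * B a j := by
  simp only [dotProduct, mulVec, Pi.star_apply]
  rw [Fintype.sum_eq_single i]
  · congr 1
    rw [Fintype.sum_eq_single j]
    · rw [Matrix.single_apply_same, one_mul]
    · intro c hc
      rw [Matrix.single_apply_of_ne, zero_mul]
      exact fun h => hc h.2.symm
  · intro b hb
    rw [Finset.sum_eq_zero, mul_zero]
    intro c _
    rw [Matrix.single_apply_of_ne, zero_mul]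
    exact fun h => hb h.1.symm

lemma pos_map {Φ : Matrix ι ι ℂ →ₗ[ℂ] Matrix ι ι ℂ} (hC : (choi Φ).PosSemidef)
    {X : Matrix ι ι ℂ} (hX : X.PosSemidef) : (Φ X).PosSemidef := by
  obtain ⟨B, hB⟩ : ∃ B : Matrix ι ι ℂ, X = Bᴴ * B := by
    open scoped MatrixOrder Matrix.Norms.L2Operator in
    obtain ⟨B, hB⟩ := CStarAlgebra.nonneg_iff_eq_star_mul_self.mp hX.nonneg
    exact ⟨B, hB⟩
  refine Matrix.PosSemidef.of_dotProduct_mulVec_nonneg ?_ ?_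
  · -- Hermitian
    ext k l
    rw [conjTranspose_apply, map_entry, map_entry, star_sum, Finset.sum_comm]
    refine Finset.sum_congr rfl fun i _ => ?_
    rw [star_sum]
    refine Finset.sum_congr rfl fun j _ => ?_
    rw [star_mul']
    have h1 : star (X i j) = X j i := by
      rw [← Matrix.conjTranspose_apply, hX.1]
    have h2 : star (choi Φ (i, l) (j, k)) = choi Φ (j, k) (i, l) := by
      rw [← Matrix.conjTranspose_apply, hC.1]
    rw [h1, h2]
  · intro z
    have hXij : ∀ i j, X i j = ∑ a, star (B a i) * B a j := by
      intro i j; rw [hB]; simp [Matrix.mul_apply, conjTranspose_apply]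
    have hR : ∀ a, dotProduct (star fun p : ι × ι => B a p.1 * z p.2)
            ((choi Φ) *ᵥ fun p : ι × ι => B a p.1 * z p.2)
        = ∑ i, ∑ j, (star (B a i) * B a j)
            * dotProduct (star z) (Φ (Matrix.single i j 1) *ᵥ z) := by
      intro a
      rw [show choi Φ = ∑ i : ι, ∑ j : ι,
        (Matrix.single i j (1 : ℂ)) ⊗ₖ (Φ (Matrix.single i j 1)) from rfl]
      rw [sum_mulVec', dotProduct_sum']
      refine Finset.sum_congr rfl fun i _ => ?_
      rw [sum_mulVec', dotProduct_sum']
      refine Finset.sum_congr rfl fun j _ => ?_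
      rw [quad_kron (fun c => B a c) z, std_quad]
    have key : ∑ a, dotProduct (star fun p : ι × ι => B a p.1 * z p.2)
            ((choi Φ) *ᵥ fun p : ι × ι => B a p.1 * z p.2)
        = dotProduct (star z) (Φ X *ᵥ z) := by
      simp only [hR]
      rw [Finset.sum_comm]
      have hL : dotProduct (star z) (Φ X *ᵥ z)
          = ∑ i, ∑ j, X i j * dotProduct (star z) (Φ (Matrix.single i j 1) *ᵥ z) := by
        conv_lhs => rw [map_eq_sum Φ X]
        rw [sum_mulVec', dotProduct_sum']
        refine Finset.sum_congr rfl fun i _ => ?_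
        rw [sum_mulVec', dotProduct_sum']
        refine Finset.sum_congr rfl fun j _ => ?_
        rw [smul_mulVec, dotProduct_smul, smul_eq_mul]
      rw [hL]
      refine Finset.sum_congr rfl fun i _ => ?_
      rw [Finset.sum_comm]
      refine Finset.sum_congr rfl fun j _ => ?_
      rw [hXij i j, Finset.sum_mul]
    rw [← key]
    exact Finset.sum_nonneg fun a _ => hC.dotProduct_mulVec_nonneg _

end Aux2

section Aux3
open Matrix Polynomial

/-- Conjugation by a unitary matrix, as an `ℝ`-algebra homomorphism. -/
noncomputable def conjHom (u : Matrix.unitaryGroup ι ℂ) :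
    Matrix ι ι ℂ →ₐ[ℝ] Matrix ι ι ℂ where
  toFun X := (u : Matrix ι ι ℂ) * X * star (u : Matrix ι ι ℂ)
  map_one' := by
    show (u : Matrix ι ι ℂ) * 1 * star (u : Matrix ι ι ℂ) = 1
    rw [mul_one]
    exact (Matrix.mem_unitaryGroup_iff).mp u.2
  map_mul' X Y := by
    have h : star (u : Matrix ι ι ℂ) * (u : Matrix ι ι ℂ) = 1 :=
      Matrix.UnitaryGroup.star_mul_self u
    calc (u : Matrix ι ι ℂ) * (X * Y) * star (u : Matrix ι ι ℂ)
        = ((u : Matrix ι ι ℂ) * X) * (star (u : Matrix ι ι ℂ) * (u : Matrix ι ι ℂ))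
            * (Y * star (u : Matrix ι ι ℂ)) := by rw [h]; noncomm_ring
      _ = (u : Matrix ι ι ℂ) * X * star (u : Matrix ι ι ℂ)
            * ((u : Matrix ι ι ℂ) * Y * star (u : Matrix ι ι ℂ)) := by noncomm_ring
  map_zero' := by simp
  map_add' X Y := by noncomm_ring
  commutes' r := by
    simp only [Algebra.algebraMap_eq_smul_one]
    show (u : Matrix ι ι ℂ) * (r • 1) * star (u : Matrix ι ι ℂ) = r • 1
    rw [Matrix.mul_smul, mul_one, Matrix.smul_mul]
    congr 1
    exact (Matrix.mem_unitaryGroup_iff).mp u.2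

lemma aeval_hermitian {N : Matrix ι ι ℂ} (hN : N.IsHermitian) (q : ℝ[X]) :
    Polynomial.aeval N q
      = (hN.eigenvectorUnitary : Matrix ι ι ℂ)
          * Matrix.diagonal (fun k => ((q.eval (hN.eigenvalues k) : ℝ) : ℂ))
          * star (hN.eigenvectorUnitary : Matrix ι ι ℂ) := by
  have hd : Polynomial.aeval
        (Matrix.diagonal (RCLike.ofReal ∘ hN.eigenvalues) : Matrix ι ι ℂ) q
      = Matrix.diagonal (fun k => ((q.eval (hN.eigenvalues k) : ℝ) : ℂ)) := by
    have h1 := Polynomial.aeval_algHom_apply (Matrix.diagonalAlgHom ℝ)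
      (RCLike.ofReal ∘ hN.eigenvalues : ι → ℂ) q
    rw [Matrix.diagonalAlgHom_apply] at h1
    have hfun : (Polynomial.aeval (RCLike.ofReal ∘ hN.eigenvalues : ι → ℂ) q : ι → ℂ)
        = fun k => ((q.eval (hN.eigenvalues k) : ℝ) : ℂ) := by
      funext k
      have h2 : ((Polynomial.aeval (RCLike.ofReal ∘ hN.eigenvalues : ι → ℂ) q)) k
          = Polynomial.aeval ((RCLike.ofReal ∘ hN.eigenvalues : ι → ℂ) k) q :=
        (Polynomial.aeval_algHom_apply (Pi.evalAlgHom ℝ (fun _ : ι => ℂ) k) _ q).symm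
      rw [h2, Function.comp_apply]
      exact Polynomial.aeval_algebraMap_apply_eq_algebraMap_eval (hN.eigenvalues k) q
    rw [h1, hfun]
    rfl
  have hc := Polynomial.aeval_algHom_apply (conjHom hN.eigenvectorUnitary)
    (Matrix.diagonal (RCLike.ofReal ∘ hN.eigenvalues) : Matrix ι ι ℂ) q
  have hspec : conjHom hN.eigenvectorUnitary
      (Matrix.diagonal (RCLike.ofReal ∘ hN.eigenvalues) : Matrix ι ι ℂ) = N :=
    (hN.spectral_theorem).symm
  rw [hspec] at hc
  rw [hc]
  show conjHom hN.eigenvectorUnitary _ = _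
  rw [hd]
  rfl

lemma eig_root {N : Matrix ι ι ℂ} (hN : N.IsHermitian) (q : ℝ[X])
    (hq : Polynomial.aeval N q = 0) (k : ι) : q.eval (hN.eigenvalues k) = 0 := by
  have h := aeval_hermitian hN q
  rw [hq] at h
  have h1 : star (hN.eigenvectorUnitary : Matrix ι ι ℂ) * (hN.eigenvectorUnitary : Matrix ι ι ℂ)
      = 1 := Matrix.UnitaryGroup.star_mul_self _
  have h2 : (hN.eigenvectorUnitary : Matrix ι ι ℂ) * star (hN.eigenvectorUnitary : Matrix ι ι ℂ)
      = 1 := (Matrix.mem_unitaryGroup_iff).mp hN.eigenvectorUnitary.2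
  set U : Matrix ι ι ℂ := (hN.eigenvectorUnitary : Matrix ι ι ℂ) with hU
  set D : Matrix ι ι ℂ := Matrix.diagonal (fun k => ((q.eval (hN.eigenvalues k) : ℝ) : ℂ)) with hD
  have h5 : D = star U * (U * D * star U) * U := by
    rw [show star U * (U * D * star U) * U = (star U * U) * D * (star U * U) by noncomm_ring,
      h1, Matrix.one_mul, Matrix.mul_one]
  rw [← h, Matrix.mul_zero, Matrix.zero_mul] at h5
  have h4 := congr_fun (congr_fun h5 k) k
  rw [hD, Matrix.diagonal_apply_eq, Matrix.zero_apply] at h4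
  exact_mod_cast h4

lemma matFun_congr {N : Matrix ι ι ℂ} (hN : N.IsHermitian) {f g : ℝ → ℝ}
    (h : ∀ k, f (hN.eigenvalues k) = g (hN.eigenvalues k)) : matFun N f = matFun N g := by
  simp only [matFun, dif_pos hN, Matrix.IsHermitian.cfc]
  have : (RCLike.ofReal ∘ f ∘ hN.eigenvalues : ι → ℂ) = RCLike.ofReal ∘ g ∘ hN.eigenvalues := by
    funext k
    simp [Function.comp_apply, h k]
  rw [this]

lemma matFun_poly {N : Matrix ι ι ℂ} (hN : N.IsHermitian) (q : ℝ[X]) :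
    matFun N (fun x => q.eval x) = Polynomial.aeval N q := by
  rw [aeval_hermitian hN q]
  simp only [matFun, dif_pos hN, Matrix.IsHermitian.cfc]
  rfl

lemma trace_mul_matFun {N : Matrix ι ι ℂ} (hN : N.IsHermitian) (B : Matrix ι ι ℂ) (f : ℝ → ℝ) :
    (B * matFun N f).trace
      = ∑ k, ((f (hN.eigenvalues k) : ℝ) : ℂ)
          * ((star (hN.eigenvectorUnitary : Matrix ι ι ℂ) * B
              * (hN.eigenvectorUnitary : Matrix ι ι ℂ)) k k) := by
  set U : Matrix ι ι ℂ := (hN.eigenvectorUnitary : Matrix ι ι ℂ) with hU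
  simp only [matFun, dif_pos hN, Matrix.IsHermitian.cfc, Unitary.conjStarAlgAut_apply,
    Unitary.coe_star]
  rw [← hU]
  have h1 : B * (U * Matrix.diagonal (RCLike.ofReal ∘ f ∘ hN.eigenvalues) * star U)
      = (B * U * Matrix.diagonal (RCLike.ofReal ∘ f ∘ hN.eigenvalues)) * star U := by
    noncomm_ring
  rw [h1, Matrix.trace_mul_comm, ← Matrix.mul_assoc, ← Matrix.mul_assoc]
  rw [Matrix.trace]
  refine Finset.sum_congr rfl fun k _ => ?_
  rw [Matrix.diag_apply, Matrix.mul_diagonal]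
  exact mul_comm _ _

lemma trace_conj {u : Matrix.unitaryGroup ι ℂ} (B : Matrix ι ι ℂ) :
    (star (u : Matrix ι ι ℂ) * B * (u : Matrix ι ι ℂ)).trace = B.trace := by
  rw [Matrix.trace_mul_cycle, (Matrix.mem_unitaryGroup_iff).mp u.2, Matrix.one_mul]

lemma conj_psd {u : Matrix.unitaryGroup ι ℂ} {B : Matrix ι ι ℂ} (hB : B.PosSemidef) :
    (star (u : Matrix ι ι ℂ) * B * (u : Matrix ι ι ℂ)).PosSemidef := by
  have := hB.conjTranspose_mul_mul_same (u : Matrix ι ι ℂ)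
  rwa [← Matrix.star_eq_conjTranspose] at this

end Aux3

section Aux4
open Matrix Polynomial

variable {r : ℕ} {v : Fin r → ι → ℂ} {p : Fin r → ℝ}

lemma proj_mul_rho (hv : OrthonormalFam v) (i : Fin r) :
    outer (v i) * (∑ j, (p j : ℂ) • outer (v j)) = (p i : ℂ) • outer (v i) := by
  rw [Finset.mul_sum]
  rw [Fintype.sum_eq_single i]
  · rw [Matrix.mul_smul, outer_mul_outer hv, if_pos rfl]
  · intro j hj
    rw [Matrix.mul_smul, outer_mul_outer hv, if_neg (Ne.symm hj), smul_zero]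

lemma proj_mul_pow (hv : OrthonormalFam v) (i : Fin r) (m : ℕ) :
    outer (v i) * (∑ j, (p j : ℂ) • outer (v j)) ^ m = ((p i : ℂ) ^ m) • outer (v i) := by
  induction m with
  | zero => simp
  | succ m ih =>
      rw [pow_succ, ← Matrix.mul_assoc, ih, Matrix.smul_mul, proj_mul_rho hv, smul_smul,
        pow_succ]

lemma proj_mul_aeval (hv : OrthonormalFam v) (i : Fin r) (q : ℝ[X]) :
    outer (v i) * Polynomial.aeval (∑ j, (p j : ℂ) • outer (v j)) q
      = ((q.eval (p i) : ℝ) : ℂ) • outer (v i) := by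
  induction q using Polynomial.induction_on' with
  | add f g hf hg =>
      rw [map_add, Matrix.mul_add, hf, hg, Polynomial.eval_add, ← add_smul]
      norm_cast
  | monomial m c =>
      rw [Polynomial.aeval_monomial, Algebra.algebraMap_eq_smul_one,
        Matrix.smul_mul, Matrix.one_mul, Matrix.mul_smul, proj_mul_pow hv,
        ← algebraMap_smul (R := ℝ) ℂ c, smul_smul, Polynomial.eval_monomial]
      push_cast
      rfl

lemma rho_mul_aeval (hv : OrthonormalFam v) (q : ℝ[X]) :
    (∑ j, (p j : ℂ) • outer (v j)) * Polynomial.aeval (∑ j, (p j : ℂ) • outer (v j)) q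
      = ∑ i, ((p i * q.eval (p i) : ℝ) : ℂ) • outer (v i) := by
  rw [Finset.sum_mul]
  refine Finset.sum_congr rfl fun i _ => ?_
  rw [Matrix.smul_mul, proj_mul_aeval hv, smul_smul]
  push_cast
  rfl

lemma rho_psd_finset (hp : ∀ i, 0 ≤ p i) (s : Finset (Fin r)) :
    (∑ j ∈ s, (p j : ℂ) • outer (v j)).PosSemidef := by
  have key : ∀ j : Fin r, ((p j : ℂ) • outer (v j)).PosSemidef := by
    intro j
    refine Matrix.PosSemidef.of_dotProduct_mulVec_nonneg ?_ ?_
    · show ((p j : ℂ) • outer (v j))ᴴ = (p j : ℂ) • outer (v j)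
      rw [Matrix.conjTranspose_smul, outer_conjTranspose, Complex.star_def, Complex.conj_ofReal]
    · intro x
      rw [Matrix.smul_mulVec, dotProduct_smul]
      have h0 : (0 : ℂ) ≤ (p j : ℂ) := by
        rw [Complex.zero_le_real]
        exact hp j
      exact mul_nonneg h0 ((outer_posSemidef (v j)).dotProduct_mulVec_nonneg x)
  refine Finset.sum_induction _ _ (fun a b ha hb => ha.add hb) Matrix.PosSemidef.zero
    fun j _ => key j

lemma rho_psd (hp : ∀ i, 0 ≤ p i) :
    (∑ j, (p j : ℂ) • outer (v j)).PosSemidef := rho_psd_finset hp Finset.univ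

lemma matLog_rho (hv : OrthonormalFam v) (hp : ∀ i, 0 < p i) :
    matLog (∑ j, (p j : ℂ) • outer (v j))
      = ∑ i, ((Real.log (p i) : ℝ) : ℂ) • outer (v i) := by
  set ρ : Matrix ι ι ℂ := ∑ j, (p j : ℂ) • outer (v j) with hρ
  have hρh : ρ.IsHermitian := (rho_psd (fun i => (hp i).le)).1
  set S : Finset ℝ := insert 0 (Finset.image p Finset.univ) with hS
  have h0S : (0 : ℝ) ∉ Finset.image p Finset.univ := by
    simp only [Finset.mem_image]
    rintro ⟨j, -, hj⟩
    exact (hp j).ne' hj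
  set P₁ : ℝ[X] := ∏ x ∈ Finset.image p Finset.univ, (X - C x) with hP₁
  have hann : Polynomial.aeval ρ ((X : ℝ[X]) * P₁) = 0 := by
    rw [_root_.map_mul, Polynomial.aeval_X, rho_mul_aeval hv]
    refine Finset.sum_eq_zero fun i _ => ?_
    have hz : P₁.eval (p i) = 0 := by
      rw [hP₁, Polynomial.eval_prod]
      refine Finset.prod_eq_zero (Finset.mem_image_of_mem p (Finset.mem_univ i)) ?_
      simp
    rw [hz, mul_zero]
    simp
  have hroots : ∀ k, hρh.eigenvalues k ∈ S := by
    intro k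
    have h := eig_root hρh _ hann k
    rw [Polynomial.eval_mul, Polynomial.eval_X, hP₁, Polynomial.eval_prod] at h
    rcases mul_eq_zero.mp h with h | h
    · rw [hS, h]
      exact Finset.mem_insert_self _ _
    · obtain ⟨x, hx, hval⟩ := Finset.prod_eq_zero_iff.mp h
      rw [Polynomial.eval_sub, Polynomial.eval_X, Polynomial.eval_C, sub_eq_zero] at hval
      rw [hS, hval]
      exact Finset.mem_insert_of_mem hx
  set q : ℝ[X] := Lagrange.interpolate S id Real.log with hq'
  have hq : ∀ x ∈ S, q.eval x = Real.log x := by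
    intro x hx
    exact Lagrange.eval_interpolate_at_node Real.log (Set.injOn_id _) hx
  have h1 : matLog ρ = matFun ρ (fun x => q.eval x) :=
    matFun_congr hρh (fun k => (hq _ (hroots k)).symm)
  rw [h1, matFun_poly hρh q]
  have hq0 : q.coeff 0 = 0 := by
    rw [Polynomial.coeff_zero_eq_eval_zero, hq 0 (Finset.mem_insert_self _ _), Real.log_zero]
  obtain ⟨R, hR⟩ : (X : ℝ[X]) ∣ q := Polynomial.X_dvd_iff.mpr hq0
  rw [hR, _root_.map_mul, Polynomial.aeval_X, rho_mul_aeval hv]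
  refine Finset.sum_congr rfl fun i _ => ?_
  have h2 : p i * R.eval (p i) = Real.log (p i) := by
    have : q.eval (p i) = p i * R.eval (p i) := by
      rw [hR, Polynomial.eval_mul, Polynomial.eval_X]
    rw [← this]
    exact hq (p i) (Finset.mem_insert_of_mem (Finset.mem_image_of_mem p (Finset.mem_univ i)))
  rw [h2]

end Aux4


/-- **Corollary 1, Eq. (14)** (Lower bound under a unital map).
If `Φ` is a unital quantum channel then `ΔS ≥ L_otm ≥ 0`; in particular
`∑ i, e^{-C(Φ(|pᵢ⟩⟨pᵢ|), ρout)} ≤ 1`. -/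
theorem information_production_lower_bound_unital
    {n r : ℕ}
    (Φ : Matrix (Fin n) (Fin n) ℂ →ₗ[ℂ] Matrix (Fin n) (Fin n) ℂ) (hΦ : IsCPTP Φ)
    (hunital : Φ 1 = 1)
    (p : Fin r → ℝ) (hp : ∀ i, 0 < p i) (hp1 : ∑ i, p i = 1)
    (v : Fin r → Fin n → ℂ) (hv : OrthonormalFam v)
    (ρin : Matrix (Fin n) (Fin n) ℂ) (hρin : ρin = ∑ i, (p i : ℂ) • outer (v i))
    (ρout : Matrix (Fin n) (Fin n) ℂ) (hρout : ρout = Φ ρin) :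
    vnEntropy ρout - vnEntropy ρin
        ≥ -Real.log (∑ i, Real.exp (-(crossEnt (Φ (outer (v i))) ρout))) ∧
      -Real.log (∑ i, Real.exp (-(crossEnt (Φ (outer (v i))) ρout))) ≥ 0 ∧
      ∑ i, Real.exp (-(crossEnt (Φ (outer (v i))) ρout)) ≤ 1 := by
  classical
  have hr0 : r ≠ 0 := by
    rintro rfl
    simp at hp1
  have hρ_psd : ρin.PosSemidef := by
    rw [hρin]; exact rho_psd (fun i => (hp i).le)
  have hσ_psd : ρout.PosSemidef := by
    rw [hρout]; exact pos_map hΦ.1 hρ_psd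
  have hσ : ρout.IsHermitian := hσ_psd.1
  set U : Matrix (Fin n) (Fin n) ℂ := (hσ.eigenvectorUnitary : Matrix (Fin n) (Fin n) ℂ) with hU
  set lam : Fin n → ℝ := hσ.eigenvalues with hlam
  set w : Fin r → Fin n → ℝ :=
    fun i k => ((star U * Φ (outer (v i)) * U) k k).re with hwdef
  have hΦE_psd : ∀ i, (Φ (outer (v i))).PosSemidef := fun i => pos_map hΦ.1 (outer_posSemidef _)
  have hconj : ∀ i, (star U * Φ (outer (v i)) * U).PosSemidef :=
    fun i => conj_psd (u := hσ.eigenvectorUnitary) (hΦE_psd i)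
  have hw_nonneg : ∀ i k, 0 ≤ w i k := fun i k => (psd_diag_re_nonneg (hconj i) k).1
  have htrρin : ρin.trace = 1 := by
    rw [hρin, Matrix.trace_sum]
    have : ∀ i : Fin r, ((p i : ℂ) • outer (v i)).trace = ((p i : ℝ) : ℂ) := by
      intro i
      rw [Matrix.trace_smul, trace_outer hv i, smul_eq_mul, mul_one]
    rw [Finset.sum_congr rfl fun i _ => this i, ← Complex.ofReal_sum, hp1, Complex.ofReal_one]
  have hw_sum : ∀ i, ∑ k, w i k = 1 := by
    intro i
    have h1 : (star U * Φ (outer (v i)) * U).trace = 1 := by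
      rw [trace_conj (u := hσ.eigenvectorUnitary), hΦ.2, trace_outer hv i]
    have h2 : ((star U * Φ (outer (v i)) * U).trace).re = ∑ k, w i k := by
      rw [Matrix.trace, Complex.re_sum]
      rfl
    rw [← h2, h1, Complex.one_re]
  have hCval : ∀ i, crossEnt (Φ (outer (v i))) ρout = -∑ k, Real.log (lam k) * w i k := by
    intro i
    rw [crossEnt, show matLog ρout = matFun ρout Real.log from rfl,
      trace_mul_matFun hσ (Φ (outer (v i))) Real.log, Complex.re_sum]
    congr 1
    refine Finset.sum_congr rfl fun k _ => ?_
    rw [Complex.re_ofReal_mul]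
  have hlam_nonneg : ∀ k, 0 ≤ lam k := fun k => hσ_psd.eigenvalues_nonneg k
  have hdiag : star U * ρout * U = Matrix.diagonal (RCLike.ofReal ∘ lam) :=
    by
      have := hσ.conjStarAlgAut_star_eigenvectorUnitary
      simp only [Unitary.conjStarAlgAut_apply, Unitary.coe_star, star_star] at this
      exact this
  have hlam_sum : ∑ k, lam k = 1 := by
    have h2 : (Matrix.diagonal (RCLike.ofReal ∘ lam) : Matrix (Fin n) (Fin n) ℂ).trace = 1 := by
      rw [← hdiag, trace_conj (u := hσ.eigenvectorUnitary), hρout, hΦ.2, htrρin]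
    rw [Matrix.trace_diagonal] at h2
    have h3 := congrArg Complex.re h2
    rw [Complex.re_sum, Complex.one_re] at h3
    rw [← h3]
    exact Finset.sum_congr rfl fun k _ => by simp
  have hvan : ∀ i k, lam k = 0 → w i k = 0 := by
    intro i k hk0
    have hrest : (∑ j ∈ Finset.univ.erase i, (p j : ℂ) • outer (v j)).PosSemidef :=
      rho_psd_finset (fun j => (hp j).le) _
    have hsplit : ρin - (p i : ℂ) • outer (v i)
        = ∑ j ∈ Finset.univ.erase i, (p j : ℂ) • outer (v j) := by
      rw [hρin, ← Finset.add_sum_erase Finset.univ _ (Finset.mem_univ i), add_sub_cancel_left]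
    have hpsd2 : (ρout - (p i : ℂ) • Φ (outer (v i))).PosSemidef := by
      have h5 : ρout - (p i : ℂ) • Φ (outer (v i)) = Φ (ρin - (p i : ℂ) • outer (v i)) := by
        rw [map_sub, _root_.map_smul, hρout]
      rw [h5, hsplit]
      exact pos_map hΦ.1 hrest
    have hconj2 := conj_psd (u := hσ.eigenvectorUnitary) hpsd2
    have hentry := (psd_diag_re_nonneg hconj2 k).1
    have hexp : star U * (ρout - (p i : ℂ) • Φ (outer (v i))) * U
        = star U * ρout * U - (p i : ℂ) • (star U * Φ (outer (v i)) * U) := by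
      rw [Matrix.mul_sub, Matrix.sub_mul, Matrix.mul_smul, Matrix.smul_mul]
    rw [hexp] at hentry
    rw [Matrix.sub_apply, Matrix.smul_apply, hdiag, Matrix.diagonal_apply_eq, smul_eq_mul] at hentry
    rw [Complex.sub_re, Complex.re_ofReal_mul] at hentry
    have hre : ((RCLike.ofReal ∘ lam) k : ℂ).re = lam k := by simp
    rw [hre, hk0] at hentry
    have h6 : p i * w i k ≤ 0 := by
      have := hentry
      simp only [hwdef] at this ⊢
      linarith
    have h7 : 0 ≤ p i * w i k := mul_nonneg (hp i).le (hw_nonneg i k)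
    have h8 : p i * w i k = 0 := le_antisymm h6 h7
    rcases mul_eq_zero.mp h8 with h | h
    · exact absurd h (ne_of_gt (hp i))
    · exact h
  have hsum_w_le : ∀ k, ∑ i, w i k ≤ 1 := by
    intro k
    set Q : Matrix (Fin n) (Fin n) ℂ := ∑ i, outer (v i) with hQdef
    have hQproj : Q * Q = Q := by
      rw [hQdef, Finset.sum_mul_sum]
      refine Finset.sum_congr rfl fun i _ => ?_
      rw [Fintype.sum_eq_single i]
      · rw [outer_mul_outer hv, if_pos rfl]
      · intro j hj
        rw [outer_mul_outer hv, if_neg (Ne.symm hj)]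
    have hQherm : Q.conjTranspose = Q := by
      rw [hQdef, Matrix.conjTranspose_sum]
      exact Finset.sum_congr rfl fun i _ => outer_conjTranspose (v i)
    have h1Q : (1 - Q).PosSemidef := by
      suffices hsq : 1 - Q = (1 - Q).conjTranspose * (1 - Q) by
        rw [hsq]; exact Matrix.posSemidef_conjTranspose_mul_self _
      have hct : (1 - Q).conjTranspose = 1 - Q := by
        rw [Matrix.conjTranspose_sub, Matrix.conjTranspose_one, hQherm]
      rw [hct]
      have hmul : (1 - Q) * (1 - Q) = 1 - Q - Q + Q * Q := by noncomm_ring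
      rw [hmul, hQproj]
      abel
    have hps := pos_map hΦ.1 h1Q
    have hc := conj_psd (u := hσ.eigenvectorUnitary) hps
    have hent := (psd_diag_re_nonneg hc k).1
    have hΦQ : Φ (1 - Q) = 1 - ∑ i, Φ (outer (v i)) := by
      rw [map_sub, hQdef, map_sum, hunital]
    have hUU : star U * U = 1 := Matrix.UnitaryGroup.star_mul_self _
    have hexp : star U * Φ (1 - Q) * U
        = 1 - ∑ i, star U * Φ (outer (v i)) * U := by
      rw [hΦQ, Matrix.mul_sub, Matrix.sub_mul, Matrix.mul_one, hUU, Finset.mul_sum,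
        Finset.sum_mul]
    rw [hexp] at hent
    rw [Matrix.sub_apply, Matrix.one_apply_eq, Matrix.sum_apply, Complex.sub_re,
      Complex.one_re, Complex.re_sum] at hent
    have : ∑ i, ((star U * Φ (outer (v i)) * U) k k).re = ∑ i, w i k := rfl
    rw [this] at hent
    linarith
  obtain ⟨Z, hZdef⟩ : ∃ Z : ℝ, Z = ∑ i, Real.exp (-(crossEnt (Φ (outer (v i))) ρout)) :=
    ⟨_, rfl⟩
  rw [← hZdef]
  have hZpos : 0 < Z := by
    rw [hZdef]
    have : Nonempty (Fin r) := ⟨⟨0, Nat.pos_of_ne_zero hr0⟩⟩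
    exact Finset.sum_pos (fun i _ => Real.exp_pos _) Finset.univ_nonempty
  have hJ : ∀ i, Real.exp (-(crossEnt (Φ (outer (v i))) ρout)) ≤ ∑ k, w i k * lam k := by
    intro i
    have hCn : -(crossEnt (Φ (outer (v i))) ρout) = ∑ k, w i k • Real.log (lam k) := by
      rw [hCval i, neg_neg]
      exact Finset.sum_congr rfl fun k _ => by rw [smul_eq_mul, mul_comm]
    rw [hCn]
    have hjen := convexOn_exp.map_sum_le (t := Finset.univ) (w := w i)
      (p := fun k => Real.log (lam k)) (fun k _ => hw_nonneg i k) (hw_sum i)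
      (fun k _ => Set.mem_univ _)
    refine hjen.trans_eq ?_
    refine Finset.sum_congr rfl fun k _ => ?_
    rw [smul_eq_mul]
    rcases eq_or_lt_of_le (hlam_nonneg k) with h0 | h0
    · rw [hvan i k h0.symm, zero_mul, zero_mul]
    · rw [Real.exp_log h0]
  have hZ1 : Z ≤ 1 := by
    rw [hZdef]
    calc ∑ i, Real.exp (-(crossEnt (Φ (outer (v i))) ρout))
        ≤ ∑ i, ∑ k, w i k * lam k := Finset.sum_le_sum fun i _ => hJ i
      _ = ∑ k, (∑ i, w i k) * lam k := by
          rw [Finset.sum_comm]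
          exact Finset.sum_congr rfl fun k _ => by rw [Finset.sum_mul]
      _ ≤ ∑ k, lam k :=
          Finset.sum_le_sum fun k _ => mul_le_of_le_one_left (hlam_nonneg k) (hsum_w_le k)
      _ = 1 := hlam_sum
  have hlogZ : Real.log Z ≤ 0 := Real.log_nonpos hZpos.le hZ1
  refine ⟨?_, by linarith, hZ1⟩
  -- first inequality: Gibbs
  have hρo : ρout = ∑ i, (p i : ℂ) • Φ (outer (v i)) := by
    rw [hρout, hρin, map_sum]
    exact Finset.sum_congr rfl fun i _ => by rw [_root_.map_smul]
  have hSout : vnEntropy ρout = ∑ i, p i * crossEnt (Φ (outer (v i))) ρout := by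
    rw [vnEntropy, crossEnt]
    nth_rewrite 1 [hρo]
    rw [Finset.sum_mul]
    simp only [Matrix.smul_mul]
    rw [Matrix.trace_sum]
    simp only [Matrix.trace_smul, smul_eq_mul]
    rw [Complex.re_sum]
    simp only [Complex.re_ofReal_mul]
    simp only [crossEnt, mul_neg, Finset.sum_neg_distrib]
  have hSin : vnEntropy ρin = -∑ i, p i * Real.log (p i) := by
    rw [vnEntropy, crossEnt]
    have h4 : ρin * matLog ρin = ∑ i, ((p i * Real.log (p i) : ℝ) : ℂ) • outer (v i) := by
      conv_lhs => rw [hρin]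
      rw [matLog_rho hv hp, Finset.sum_mul_sum]
      refine Finset.sum_congr rfl fun i _ => ?_
      rw [Fintype.sum_eq_single i]
      · rw [Matrix.smul_mul, Matrix.mul_smul, outer_mul_outer hv, if_pos rfl, smul_smul]
        rw [← Complex.ofReal_mul]
      · intro j hj
        rw [Matrix.smul_mul, Matrix.mul_smul, outer_mul_outer hv, if_neg (Ne.symm hj),
          smul_zero, smul_zero]
    rw [h4, Matrix.trace_sum]
    have h5 : ∀ i : Fin r, (((p i * Real.log (p i) : ℝ) : ℂ) • outer (v i)).trace
        = ((p i * Real.log (p i) : ℝ) : ℂ) := by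
      intro i
      rw [Matrix.trace_smul, trace_outer hv i, smul_eq_mul, mul_one]
    rw [Finset.sum_congr rfl fun i _ => h5 i, Complex.re_sum]
    simp only [Complex.ofReal_re]
  rw [hSout, hSin]
  have hkey : ∀ i, p i * (-(crossEnt (Φ (outer (v i))) ρout) - Real.log (p i) - Real.log Z)
      ≤ Real.exp (-(crossEnt (Φ (outer (v i))) ρout)) / Z - p i := by
    intro i
    set c : ℝ := crossEnt (Φ (outer (v i))) ρout with hc
    have hpz : 0 < p i * Z := mul_pos (hp i) hZpos
    have hlog : Real.log (Real.exp (-c) / (p i * Z)) ≤ Real.exp (-c) / (p i * Z) - 1 :=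
      Real.log_le_sub_one_of_pos (div_pos (Real.exp_pos _) hpz)
    have hexpand : Real.log (Real.exp (-c) / (p i * Z))
        = -c - Real.log (p i) - Real.log Z := by
      rw [Real.log_div (Real.exp_ne_zero _) (ne_of_gt hpz), Real.log_exp,
        Real.log_mul (ne_of_gt (hp i)) (ne_of_gt hZpos)]
      ring
    calc p i * (-c - Real.log (p i) - Real.log Z)
        = p i * Real.log (Real.exp (-c) / (p i * Z)) := by rw [hexpand]
      _ ≤ p i * (Real.exp (-c) / (p i * Z) - 1) :=
          mul_le_mul_of_nonneg_left hlog (hp i).le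
      _ = Real.exp (-c) / Z - p i := by
          rw [mul_sub, mul_one, ← mul_div_assoc, mul_div_mul_left _ _ (ne_of_gt (hp i))]
  have hsum := Finset.sum_le_sum fun i (_ : i ∈ Finset.univ) => hkey i
  have hRHS : ∑ i, (Real.exp (-(crossEnt (Φ (outer (v i))) ρout)) / Z - p i) = 0 := by
    rw [Finset.sum_sub_distrib, ← Finset.sum_div, ← hZdef, div_self (ne_of_gt hZpos), hp1]
    ring
  have hLHS : ∑ i, p i * (-(crossEnt (Φ (outer (v i))) ρout) - Real.log (p i) - Real.log Z)
      = -(∑ i, p i * crossEnt (Φ (outer (v i))) ρout) - (∑ i, p i * Real.log (p i))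
        - Real.log Z := by
    simp only [mul_sub, mul_neg]
    rw [Finset.sum_sub_distrib, Finset.sum_sub_distrib, Finset.sum_neg_distrib,
      ← Finset.sum_mul, hp1, one_mul]
  rw [hLHS, hRHS] at hsum
  linarith


end QCE
end

section
/- (Eq. (29), with sign corrected: entropic disturbance of the quantum autoencoder) In the quantum autoencoder setup with input ensemble L = {p_i, |p_i⟩⟨p_i|}_{i=1}^r, the entropic disturbance equals Δχ = S(ρ_in) − S(ρ_A) + Σ_{i=1}^r p_i S(ρ_A^{(i)}), where ρ_A = Tr_B[U ρ_in U†] and ρ_A^{(i)} = Tr_B[U |p_i⟩⟨p_i| U†]; in particular, Δχ is independent of the choice of the fresh-qubit state ρ_B. -/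
open scoped Kronecker BigOperators ComplexOrder

namespace QCE

variable {ι : Type*} [Fintype ι] [DecidableEq ι]

section Aux

open Matrix Polynomial

/-- conjTranspose of a Kronecker product -/
lemma kron_conjTranspose {κ : Type*} [Fintype κ] (A : Matrix ι ι ℂ) (B : Matrix κ κ ℂ) :
    (A ⊗ₖ B).conjTranspose = A.conjTranspose ⊗ₖ B.conjTranspose := by
  ext ⟨i, j⟩ ⟨k, l⟩
  simp [Matrix.conjTranspose_apply, Matrix.kroneckerMap_apply]

/-- charpoly is invariant under unitary conjugation -/
lemma charpoly_unitary_conj (P A : Matrix ι ι ℂ)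
    (hP1 : P * P.conjTranspose = 1) (hP2 : P.conjTranspose * P = 1) :
    (P * A * P.conjTranspose).charpoly = A.charpoly := by
  have hscal : ∀ M : Matrix ι ι ℂ[X], Matrix.scalar ι (X : ℂ[X]) * M = M * Matrix.scalar ι X :=
    fun M => (scalar_commute (X : ℂ[X]) (Commute.all _) M).eq
  have hcm : charmatrix (P * A * P.conjTranspose) =
      (C : ℂ →+* ℂ[X]).mapMatrix P * charmatrix A *
        (C : ℂ →+* ℂ[X]).mapMatrix P.conjTranspose := by
    rw [charmatrix, charmatrix, mul_sub, sub_mul]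
    congr 1
    · rw [← hscal, mul_assoc, ← RingHom.map_mul, hP1, RingHom.map_one, mul_one]
    · rw [RingHom.map_mul, RingHom.map_mul]
  have hPP : (C : ℂ →+* ℂ[X]).mapMatrix P.conjTranspose * (C : ℂ →+* ℂ[X]).mapMatrix P = 1 := by
    rw [← RingHom.map_mul, hP2, RingHom.map_one]
  rw [Matrix.charpoly, hcm, det_mul, det_mul, mul_comm, ← mul_assoc, ← det_mul,
    hPP, det_one, one_mul, Matrix.charpoly]

lemma charpoly_diag_conj (P : Matrix ι ι ℂ) (d : ι → ℝ)
    (hP1 : P * P.conjTranspose = 1) (hP2 : P.conjTranspose * P = 1) :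
    (P * Matrix.diagonal (fun i => (d i : ℂ)) * P.conjTranspose).charpoly
      = ∏ i, (X - C (d i : ℂ)) := by
  rw [charpoly_unitary_conj _ _ hP1 hP2, Matrix.charpoly]
  have : charmatrix (Matrix.diagonal (fun i => (d i : ℂ)))
      = Matrix.diagonal (fun i => (X - C (d i : ℂ))) := by
    ext i j
    rcases eq_or_ne i j with rfl | h
    · simp [charmatrix_apply_eq]
    · simp [charmatrix_apply_ne _ _ _ h, Matrix.diagonal_apply_ne _ h]
  rw [this, det_diagonal]

lemma herm_of_diag_conj (P A : Matrix ι ι ℂ) (d : ι → ℝ)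
    (hA : A = P * Matrix.diagonal (fun i => (d i : ℂ)) * P.conjTranspose) :
    A.IsHermitian := by
  rw [Matrix.IsHermitian, hA]
  rw [conjTranspose_mul, conjTranspose_mul, conjTranspose_conjTranspose, diagonal_conjTranspose]
  have : star (fun i => (d i : ℂ)) = fun i => (d i : ℂ) := by
    funext i; simp [Pi.star_apply]
  rw [this, mul_assoc]

lemma trace_diag_conj (P : Matrix ι ι ℂ) (hP2 : P.conjTranspose * P = 1) (f : ι → ℂ) :
    (P * Matrix.diagonal f * P.conjTranspose).trace = ∑ i, f i := by
  rw [trace_mul_cycle, hP2, one_mul, trace_diagonal]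

/-- The key computation: entropy of a unitary-diagonalized matrix. -/
lemma vnEntropy_of_diag_conj (P A : Matrix ι ι ℂ) (d : ι → ℝ)
    (hP1 : P * P.conjTranspose = 1) (hP2 : P.conjTranspose * P = 1)
    (hA : A = P * Matrix.diagonal (fun i => (d i : ℂ)) * P.conjTranspose) :
    vnEntropy A = -∑ i, d i * Real.log (d i) := by
  have hH : A.IsHermitian := herm_of_diag_conj P A d hA
  set V : Matrix ι ι ℂ := (hH.eigenvectorUnitary : Matrix ι ι ℂ) with hV
  have hV2 : star V * V = 1 := Matrix.mem_unitaryGroup_iff'.mp (hH.eigenvectorUnitary).2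
  have hV1 : V * star V = 1 := Matrix.mem_unitaryGroup_iff.mp (hH.eigenvectorUnitary).2
  set ev : ι → ℝ := hH.eigenvalues with hev
  have hspec : A = V * Matrix.diagonal (fun i => (ev i : ℂ)) * star V := by
    have := hH.spectral_theorem
    exact this
  -- step 1: vnEntropy A = -∑ ev log ev
  have hlog : matLog A = V * Matrix.diagonal (fun i => ((Real.log (ev i) : ℝ) : ℂ)) * star V := by
    rw [matLog, matFun, dif_pos hH, Matrix.IsHermitian.cfc]
    rfl
  have hprod : A * matLog A
      = V * Matrix.diagonal (fun i => ((ev i : ℂ)) * ((Real.log (ev i) : ℝ) : ℂ)) * star V := by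
    rw [hlog]
    nth_rewrite 1 [hspec]
    simp only [Matrix.mul_assoc]
    rw [← Matrix.mul_assoc (star V) V, hV2, one_mul,
      ← Matrix.mul_assoc (Matrix.diagonal _) (Matrix.diagonal _), diagonal_mul_diagonal]
  have htr : (A * matLog A).trace = ∑ i, ((ev i : ℂ)) * ((Real.log (ev i) : ℝ) : ℂ) := by
    rw [hprod, Matrix.trace_mul_cycle, hV2, one_mul, trace_diagonal]
  have hS : vnEntropy A = -∑ i, ev i * Real.log (ev i) := by
    rw [vnEntropy, crossEnt, htr]
    norm_cast
  -- step 2: multiset of eigenvalues equals multiset of d's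
  have hchar : (∏ i, (X - C ((d i : ℂ)))) = ∏ i, (X - C ((ev i : ℂ))) := by
    rw [← charpoly_diag_conj P d hP1 hP2, ← hA]
    have : star V = V.conjTranspose := rfl
    rw [← charpoly_diag_conj V ev hV1 (by rw [← this]; exact hV2)]
    rw [← this, ← hspec]
  have hms : (Finset.univ.val.map (fun i => ((d i : ℂ))))
      = (Finset.univ.val.map (fun i => ((ev i : ℂ)))) := by
    have h1 : ∀ (e : ι → ℝ), (∏ i, (X - C ((e i : ℂ))))
        = ((Finset.univ.val.map (fun i => ((e i : ℂ)))).map (fun a => X - C a)).prod := by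
      intro e
      rw [Multiset.map_map, Finset.prod_eq_multiset_prod]
      rfl
    have := congrArg Polynomial.roots hchar
    rwa [h1 d, h1 ev, Polynomial.roots_multiset_prod_X_sub_C,
      Polynomial.roots_multiset_prod_X_sub_C] at this
  -- step 3: transfer the sum
  have hsum : ∑ i, d i * Real.log (d i) = ∑ i, ev i * Real.log (ev i) := by
    have h2 : ∀ (e : ι → ℝ), ∑ i, e i * Real.log (e i)
        = ((Finset.univ.val.map (fun i => ((e i : ℂ)))).map
            (fun z : ℂ => z.re * Real.log z.re)).sum := by
      intro e
      rw [Multiset.map_map, Finset.sum_eq_multiset_sum]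
      rfl
    rw [h2 d, h2 ev, hms]
  rw [hS, hsum]

/-- trace via multiset too: sum of d's equals the trace. -/
lemma trace_of_diag_conj_real (P A : Matrix ι ι ℂ) (d : ι → ℝ)
    (hP2 : P.conjTranspose * P = 1)
    (hA : A = P * Matrix.diagonal (fun i => (d i : ℂ)) * P.conjTranspose)
    (htr : A.trace = 1) : ∑ i, d i = 1 := by
  have := trace_diag_conj P hP2 (fun i => (d i : ℂ))
  rw [← hA, htr] at this
  have h2 : ((∑ i, d i : ℝ) : ℂ) = ((1 : ℝ) : ℂ) := by push_cast; rw [← this]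
  exact_mod_cast h2

lemma herm_conj (U M : Matrix ι ι ℂ) (hM : M.IsHermitian) : (U * M * U.conjTranspose).IsHermitian := by
  rw [Matrix.IsHermitian, Matrix.conjTranspose_mul, Matrix.conjTranspose_mul,
    Matrix.conjTranspose_conjTranspose, hM.eq, Matrix.mul_assoc]

lemma trace_conj_s10 (U M : Matrix ι ι ℂ) (hU2 : U.conjTranspose * U = 1) :
    (U * M * U.conjTranspose).trace = M.trace := by
  rw [Matrix.trace_mul_cycle, hU2, Matrix.one_mul]

/-- Entropy of `Uᴴ (X ⊗ Y) U` for unitary `U` and Hermitian unit-trace `X`, `Y`. -/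
lemma vnEntropy_conj_kron {dA dB : ℕ}
    (U : Matrix (Fin dA × Fin dB) (Fin dA × Fin dB) ℂ)
    (hU1 : U * U.conjTranspose = 1) (hU2 : U.conjTranspose * U = 1)
    (X : Matrix (Fin dA) (Fin dA) ℂ) (Y : Matrix (Fin dB) (Fin dB) ℂ)
    (hX : X.IsHermitian) (hY : Y.IsHermitian)
    (hXt : X.trace = 1) (hYt : Y.trace = 1) :
    vnEntropy (U.conjTranspose * (X ⊗ₖ Y) * U) = vnEntropy X + vnEntropy Y := by
  set V : Matrix (Fin dA) (Fin dA) ℂ := (hX.eigenvectorUnitary : Matrix (Fin dA) (Fin dA) ℂ)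
  set W : Matrix (Fin dB) (Fin dB) ℂ := (hY.eigenvectorUnitary : Matrix (Fin dB) (Fin dB) ℂ)
  have hV2 : V.conjTranspose * V = 1 := Matrix.mem_unitaryGroup_iff'.mp (hX.eigenvectorUnitary).2
  have hV1 : V * V.conjTranspose = 1 := Matrix.mem_unitaryGroup_iff.mp (hX.eigenvectorUnitary).2
  have hW2 : W.conjTranspose * W = 1 := Matrix.mem_unitaryGroup_iff'.mp (hY.eigenvectorUnitary).2
  have hW1 : W * W.conjTranspose = 1 := Matrix.mem_unitaryGroup_iff.mp (hY.eigenvectorUnitary).2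
  set lam : Fin dA → ℝ := hX.eigenvalues
  set mu : Fin dB → ℝ := hY.eigenvalues
  have hXspec : X = V * Matrix.diagonal (fun i => ((lam i : ℝ) : ℂ)) * V.conjTranspose :=
    hX.spectral_theorem
  have hYspec : Y = W * Matrix.diagonal (fun i => ((mu i : ℝ) : ℂ)) * W.conjTranspose :=
    hY.spectral_theorem
  -- entropies of the factors
  have hSX : vnEntropy X = -∑ i, lam i * Real.log (lam i) :=
    vnEntropy_of_diag_conj V X lam hV1 hV2 hXspec
  have hSY : vnEntropy Y = -∑ j, mu j * Real.log (mu j) :=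
    vnEntropy_of_diag_conj W Y mu hW1 hW2 hYspec
  have hsl : ∑ i, lam i = 1 := trace_of_diag_conj_real V X lam hV2 hXspec hXt
  have hsm : ∑ j, mu j = 1 := trace_of_diag_conj_real W Y mu hW2 hYspec hYt
  -- the unitary diagonalizing the conjugated Kronecker product
  set P : Matrix (Fin dA × Fin dB) (Fin dA × Fin dB) ℂ := U.conjTranspose * (V ⊗ₖ W) with hPdef
  have hPH : P.conjTranspose = (V.conjTranspose ⊗ₖ W.conjTranspose) * U := by
    rw [hPdef, Matrix.conjTranspose_mul, Matrix.conjTranspose_conjTranspose,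
      kron_conjTranspose]
  have hkron1 : (V ⊗ₖ W) * (V.conjTranspose ⊗ₖ W.conjTranspose) = 1 := by
    rw [← Matrix.mul_kronecker_mul, hV1, hW1, Matrix.one_kronecker_one]
  have hkron2 : (V.conjTranspose ⊗ₖ W.conjTranspose) * (V ⊗ₖ W) = 1 := by
    rw [← Matrix.mul_kronecker_mul, hV2, hW2, Matrix.one_kronecker_one]
  have hP1 : P * P.conjTranspose = 1 := by
    rw [hPdef, hPH, Matrix.mul_assoc, ← Matrix.mul_assoc (V ⊗ₖ W), hkron1, Matrix.one_mul, hU2]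
  have hP2 : P.conjTranspose * P = 1 := by
    rw [hPdef, hPH, Matrix.mul_assoc, ← Matrix.mul_assoc U, hU1, Matrix.one_mul, hkron2]
  have hdecomp : U.conjTranspose * (X ⊗ₖ Y) * U
      = P * Matrix.diagonal (fun q : Fin dA × Fin dB => ((lam q.1 * mu q.2 : ℝ) : ℂ))
          * P.conjTranspose := by
    rw [hPdef, hPH, hXspec, hYspec]
    rw [Matrix.mul_kronecker_mul, Matrix.mul_kronecker_mul, Matrix.diagonal_kronecker_diagonal]
    have : (Matrix.diagonal fun q : Fin dA × Fin dB => ((lam q.1 : ℝ) : ℂ) * ((mu q.2 : ℝ) : ℂ))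
        = Matrix.diagonal (fun q : Fin dA × Fin dB => ((lam q.1 * mu q.2 : ℝ) : ℂ)) := by
      funext q; push_cast; ring
    rw [this]
    simp only [Matrix.mul_assoc]
  have hS : vnEntropy (U.conjTranspose * (X ⊗ₖ Y) * U)
      = -∑ q : Fin dA × Fin dB, (lam q.1 * mu q.2) * Real.log (lam q.1 * mu q.2) :=
    vnEntropy_of_diag_conj P _ _ hP1 hP2 hdecomp
  rw [hS, hSX, hSY, Fintype.sum_prod_type]
  have hterm : ∀ (i : Fin dA) (j : Fin dB),
      (lam i * mu j) * Real.log (lam i * mu j)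
        = (lam i * Real.log (lam i)) * mu j + lam i * (mu j * Real.log (mu j)) := by
    intro i j
    rcases eq_or_ne (lam i) 0 with h | h
    · simp [h]
    rcases eq_or_ne (mu j) 0 with h' | h'
    · simp [h']
    rw [Real.log_mul h h']
    ring
  simp_rw [hterm, Finset.sum_add_distrib, ← Finset.mul_sum, ← Finset.sum_mul, hsm, hsl]
  ring

lemma outer_isHermitian (v : ι → ℂ) : (outer v).IsHermitian := by
  ext i j
  simp only [outer, Matrix.conjTranspose_apply, Matrix.vecMulVec_apply, Pi.star_apply,
    star_mul', star_star]
  ring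

lemma trace_outer_eq_one {r : ℕ} (v : Fin r → ι → ℂ) (hv : OrthonormalFam v) (i : Fin r) :
    (outer (v i)).trace = 1 := by
  have h := hv i i
  rw [if_pos rfl] at h
  rw [Matrix.trace, ← h]
  refine Finset.sum_congr rfl fun a _ => ?_
  simp only [outer, Matrix.diag, Matrix.vecMulVec_apply, Pi.star_apply]
  ring

lemma ptraceB_isHermitian {dA dB : ℕ} (M : Matrix (Fin dA × Fin dB) (Fin dA × Fin dB) ℂ)
    (hM : M.IsHermitian) : (ptraceB M).IsHermitian := by
  ext i j
  simp only [ptraceB, Matrix.conjTranspose_apply, Matrix.of_apply, star_sum]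
  apply Finset.sum_congr rfl
  intro k _
  rw [← Matrix.conjTranspose_apply, hM.eq]

lemma trace_ptraceB {dA dB : ℕ} (M : Matrix (Fin dA × Fin dB) (Fin dA × Fin dB) ℂ) :
    (ptraceB M).trace = M.trace := by
  rw [Matrix.trace, Matrix.trace, Fintype.sum_prod_type]
  rfl

end Aux

/-- **Eq. (29), sign corrected** (Entropic disturbance of the quantum autoencoder).
`Δχ = S(ρin) - S(ρ_A) + ∑ i, pᵢ S(ρ_A⁽ⁱ⁾)`; in particular `Δχ` does not depend on the
fresh-qubit state `ρ_B`. -/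
theorem qae_entropic_disturbance_formula
    {dA dB r : ℕ}
    (U : Matrix (Fin dA × Fin dB) (Fin dA × Fin dB) ℂ)
    (hU : U * U.conjTranspose = 1 ∧ U.conjTranspose * U = 1)
    (ρB : Matrix (Fin dB) (Fin dB) ℂ) (hρB : IsDensityMatrix ρB)
    (p : Fin r → ℝ) (hp : ∀ i, 0 < p i) (hp1 : ∑ i, p i = 1)
    (v : Fin r → (Fin dA × Fin dB) → ℂ) (hv : OrthonormalFam v)
    (ρin : Matrix (Fin dA × Fin dB) (Fin dA × Fin dB) ℂ)
    (hρin : ρin = ∑ i, (p i : ℂ) • outer (v i))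
    (ρA : Matrix (Fin dA) (Fin dA) ℂ) (hρA : ρA = ptraceB (U * ρin * U.conjTranspose))
    (ρAi : Fin r → Matrix (Fin dA) (Fin dA) ℂ)
    (hρAi : ∀ i, ρAi i = ptraceB (U * outer (v i) * U.conjTranspose))
    (ρout : Matrix (Fin dA × Fin dB) (Fin dA × Fin dB) ℂ)
    (hρout : ρout = U.conjTranspose * (ρA ⊗ₖ ρB) * U)
    (Φi : Fin r → Matrix (Fin dA × Fin dB) (Fin dA × Fin dB) ℂ)
    (hΦi : ∀ i, Φi i = U.conjTranspose * ((ρAi i) ⊗ₖ ρB) * U)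
    (Δχ : ℝ)
    (hΔχ : Δχ = vnEntropy ρin - (vnEntropy ρout - ∑ i, p i * vnEntropy (Φi i))) :
    Δχ = vnEntropy ρin - vnEntropy ρA + ∑ i, p i * vnEntropy (ρAi i) := by
  obtain ⟨hU1, hU2⟩ := hU
  -- Hermitian-ness
  have hρin_herm : ρin.IsHermitian := by
    rw [Matrix.IsHermitian, hρin, Matrix.conjTranspose_sum]
    refine Finset.sum_congr rfl fun i _ => ?_
    rw [Matrix.conjTranspose_smul, (outer_isHermitian (v i)).eq, Complex.star_def,
      Complex.conj_ofReal]
  have hρA_herm : ρA.IsHermitian := by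
    rw [hρA]; exact ptraceB_isHermitian _ (herm_conj U ρin hρin_herm)
  have hρAi_herm : ∀ i, (ρAi i).IsHermitian := fun i => by
    rw [hρAi]; exact ptraceB_isHermitian _ (herm_conj U _ (outer_isHermitian (v i)))
  have hρB_herm : ρB.IsHermitian := hρB.1.1
  -- traces
  have hρin_tr : ρin.trace = 1 := by
    rw [hρin, Matrix.trace_sum]
    have : ∀ i, ((p i : ℂ) • outer (v i)).trace = (p i : ℂ) := fun i => by
      rw [Matrix.trace_smul, trace_outer_eq_one v hv i, smul_eq_mul, mul_one]
    rw [Finset.sum_congr rfl fun i _ => this i]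
    rw [← Complex.ofReal_sum, hp1, Complex.ofReal_one]
  have hρA_tr : ρA.trace = 1 := by
    rw [hρA, trace_ptraceB, trace_conj_s10 U _ hU2, hρin_tr]
  have hρAi_tr : ∀ i, (ρAi i).trace = 1 := fun i => by
    rw [hρAi, trace_ptraceB, trace_conj_s10 U _ hU2, trace_outer_eq_one v hv i]
  -- entropies of outputs
  have hSout : vnEntropy ρout = vnEntropy ρA + vnEntropy ρB := by
    rw [hρout]
    exact vnEntropy_conj_kron U hU1 hU2 ρA ρB hρA_herm hρB_herm hρA_tr hρB.2
  have hSΦi : ∀ i, vnEntropy (Φi i) = vnEntropy (ρAi i) + vnEntropy ρB := fun i => by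
    rw [hΦi]
    exact vnEntropy_conj_kron U hU1 hU2 (ρAi i) ρB (hρAi_herm i) hρB_herm (hρAi_tr i) hρB.2
  rw [hΔχ, hSout]
  rw [Finset.sum_congr rfl fun i _ => by rw [hSΦi i]]
  simp_rw [mul_add, Finset.sum_add_distrib, ← Finset.sum_mul, hp1]
  ring


end QCE
end
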